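/- For the dihedral group Dₙ with n odd, every group homomorphism φ : [Dₙ, Dₙ] → Dₙ is Dₙ-equivariant, i.e. φ(g h g⁻¹) = g φ(h) g⁻¹ for all g ∈ Dₙ and h ∈ [Dₙ, Dₙ]. -/

import Mathlib

open DihedralGroup

private lemma r_inv' {n : ℕ} (i : ZMod n) : (r i)⁻¹ = r (-i) := rfl

private lemma sr_inv' {n : ℕ} (i : ZMod n) : (sr i)⁻¹ = sr i := rfl

private lemma r_pow' {n : ℕ} (i : ZMod n) (k : ℕ) : (r i) ^ k = r ((k : ZMod n) * i) := by
  induction k with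
  | zero => simp [one_def, -r_zero]
  | succ k ih => rw [pow_succ, ih, r_mul_r]; congr 1; push_cast; ring

/-- the sign homomorphism -/
private def sgn (n : ℕ) : DihedralGroup n →* Multiplicative (ZMod 2) where
  toFun x := Multiplicative.ofAdd (match x with | .r _ => 0 | .sr _ => 1)
  map_one' := rfl
  map_mul' := by rintro (a|a) (b|b) <;> simp [← ofAdd_add] <;> rfl

private lemma mem_comm_r {n : ℕ} {h : DihedralGroup n}
    (hh : h ∈ commutator (DihedralGroup n)) : ∃ i, h = r i := by
  cases h with
  | r i => exact ⟨i, rfl⟩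
  | sr i =>
    have := Abelianization.commutator_subset_ker (sgn n) hh
    have h2 : Multiplicative.ofAdd (1 : ZMod 2) = 1 := this
    exact absurd h2 (by decide)

private lemma phi_congr {G : Type*} [Group G] {S : Subgroup G} (φ : ↥S →* G)
    {a b : G} (h : a = b) (pa : a ∈ S) (pb : b ∈ S) :
    φ ⟨a, pa⟩ = φ ⟨b, pb⟩ := by subst h; rfl

/-- For the dihedral group `Dₙ` with `n` odd, every group homomorphism
`φ : [Dₙ,Dₙ] → Dₙ` is `Dₙ`-equivariant. -/
theorem dihedral_hom_equivariant (n : ℕ) (hn : Odd n)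
    (φ : ↥(commutator (DihedralGroup n)) →* DihedralGroup n) :
    ∀ (g h : DihedralGroup n) (hh : h ∈ commutator (DihedralGroup n)),
      φ ⟨g * h * g⁻¹, (Subgroup.Normal.conj_mem inferInstance h hh g)⟩ =
        g * φ ⟨h, hh⟩ * g⁻¹ := by
  intro g h hh
  obtain ⟨i, rfl⟩ := mem_comm_r hh
  -- the image of a rotation is a rotation
  obtain ⟨k, hk⟩ : ∃ k, φ ⟨r i, hh⟩ = r k := by
    have hpow : φ ⟨r i, hh⟩ ^ n = 1 := by
      rw [← map_pow]
      have : (⟨r i, hh⟩ : commutator (DihedralGroup n)) ^ n = 1 := by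
        apply Subtype.ext
        rw [Subgroup.coe_pow]
        simp only [r_pow', ZMod.natCast_self, zero_mul, ← one_def, OneMemClass.coe_one]
      rw [this, map_one]
    cases hφ : φ ⟨r i, hh⟩ with
    | r k => exact ⟨k, rfl⟩
    | sr j =>
      exfalso
      rw [hφ] at hpow
      obtain ⟨m, rfl⟩ := hn
      rw [pow_succ, pow_mul] at hpow
      simp only [sq, sr_mul_self, one_pow, one_mul] at hpow
      exact absurd hpow (by simp [one_def, -r_zero])
  cases g with
  | r j =>
    have e : r j * r i * (r j)⁻¹ = r i := by
      rw [r_inv', r_mul_r, r_mul_r]; congr 1; ring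
    rw [phi_congr φ e _ hh, hk, r_inv', r_mul_r, r_mul_r]
    congr 1; ring
  | sr j =>
    have e : sr j * r i * (sr j)⁻¹ = r (-i) := by
      rw [sr_inv', sr_mul_r, sr_mul_sr]; congr 1; ring
    have pb : r (-i) ∈ commutator (DihedralGroup n) :=
      r_inv' i ▸ (commutator (DihedralGroup n)).inv_mem hh
    rw [phi_congr φ e _ pb]
    have : φ ⟨r (-i), pb⟩ = φ (⟨r i, hh⟩⁻¹) := rfl
    rw [this, map_inv, hk, r_inv', sr_inv', sr_mul_r, sr_mul_sr]
    congr 1; ring
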